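/- Let F be holomorphic on U ⊂ ℂ^n and φ = dF : U → ℂ^{2n} as above. Then φ is Kählerian (i.e., the pullback φ*γ of the Hermitian form γ = i·Ω(·,τ·) is nondegenerate) if and only if det(Im ∂²F) ≠ 0, where ∂²F = (∂²F/∂z^i∂z^j) is the holomorphic Hessian matrix of F. -/

import Mathlib

noncomputable section

/-- `V = ℂ^{2n} = T*ℂ^n` with coordinates `(z, w)`. -/
abbrev Vsp (n : ℕ) := (Fin n → ℂ) × (Fin n → ℂ)

/-- The canonical complex symplectic form `Ω = Σ dz^i ∧ dw_i`. -/
def Omg (n : ℕ) (u v : Vsp n) : ℂ := ∑ i, (u.1 i * v.2 i - u.2 i * v.1 i)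

/-- Complex conjugation with respect to the real form `ℝ^{2n}`. -/
def tauC (n : ℕ) (v : Vsp n) : Vsp n :=
  (fun i => starRingEnd ℂ (v.1 i), fun i => starRingEnd ℂ (v.2 i))

/-- The Hermitian form `γ(u,v) = i·Ω(u, τ v)`. -/
def gammaH (n : ℕ) (u v : Vsp n) : ℂ := Complex.I * Omg n u (tauC n v)

/-- The differential `dφ_z` of `φ = dF` applied to a tangent vector `a ∈ ℂ^n`. -/
def dphiF (n : ℕ) (F : (Fin n → ℂ) → ℂ) (z : Fin n → ℂ) (a : Fin n → ℂ) : Vsp n :=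
  (a, fun i => fderiv ℂ (fun w => fderiv ℂ F w (Pi.single i 1)) z a)

/-- The holomorphic Hessian matrix `∂²F = (∂²F/∂z^i∂z^j)` of `F` at `z`. -/
def hessF (n : ℕ) (F : (Fin n → ℂ) → ℂ) (z : Fin n → ℂ) : Matrix (Fin n) (Fin n) ℂ :=
  fun i j => fderiv ℂ (fun w => fderiv ℂ F w (Pi.single j 1)) z (Pi.single i 1)

set_option maxHeartbeats 1000000
set_option synthInstance.maxHeartbeats 1000000
set_option linter.unusedTactic false

open MeasureTheory Metric Set Complex

section AuxAnalytic

variable {n : ℕ}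

lemma cauchyRep {U : Set (Fin n → ℂ)} (hU : IsOpen U) {F : (Fin n → ℂ) → ℂ} (hF : DifferentiableOn ℂ F U)
    {z : (Fin n → ℂ)} {r : ℝ} (hr : 0 < r) (hsub : closedBall z (3*r) ⊆ U)
    {b : (Fin n → ℂ)} (hb : ‖b‖ ≤ 1) {x : (Fin n → ℂ)} (hx : x ∈ closedBall z (2*r)) :
    fderiv ℂ F x b = (2 * ↑Real.pi * I)⁻¹ •
      ∮ s in C(0, r), ((1:ℂ) / (s - 0)) ^ 1 • (s - 0)⁻¹ • F (x + s • b) := by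
  have hmem : ∀ s : ℂ, s ∈ closedBall (0:ℂ) r → x + s • b ∈ U := by
    intro s hs
    apply hsub
    simp only [mem_closedBall, dist_eq_norm] at *
    calc ‖x + s • b - z‖ = ‖(x - z) + s • b‖ := by ring_nf
      _ ≤ ‖x - z‖ + ‖s • b‖ := norm_add_le _ _
      _ ≤ 2*r + ‖s‖ * ‖b‖ := by rw [norm_smul]; gcongr
      _ ≤ 2*r + r * 1 := by gcongr; simpa using hs
      _ ≤ 3*r := by ring_nf; linarith
  have hdiff : DifferentiableOn ℂ (fun s : ℂ => F (x + s • b)) (closedBall 0 r) := by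
    intro s hs
    refine DifferentiableAt.differentiableWithinAt ?_
    exact (hF.differentiableAt (hU.mem_nhds (hmem s hs))).comp s
      (((differentiableAt_id).smul_const b).const_add x)
  have hcb : closedBall (0:ℂ) ((r.toNNReal : ℝ)) = closedBall 0 r := by
    rw [Real.coe_toNNReal _ hr.le]
  have hr' : (0 : NNReal) < r.toNNReal := by simpa using hr
  have hps : HasFPowerSeriesAt (fun s : ℂ => F (x + s • b))
      (cauchyPowerSeries (fun s : ℂ => F (x + s • b)) 0 r.toNNReal) 0 :=
    (DifferentiableOn.hasFPowerSeriesOnBall (hcb ▸ hdiff) hr').hasFPowerSeriesAt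
  have hder : deriv (fun s : ℂ => F (x + s • b)) 0 = fderiv ℂ F x b := by
    have h1 : HasDerivAt (fun s : ℂ => x + s • b) b 0 := by
      simpa using ((hasDerivAt_id (0:ℂ)).smul_const b).const_add x
    have h2 : HasFDerivAt F (fderiv ℂ F x) x :=
      (hF.differentiableAt (hU.mem_nhds (hsub (closedBall_subset_closedBall (by linarith) hx)))).hasFDerivAt
    have h2' : HasFDerivAt F (fderiv ℂ F x) (x + (0:ℂ) • b) := by simpa using h2
    exact (h2'.comp_hasDerivAt 0 h1).deriv
  rw [Real.coe_toNNReal _ hr.le] at hps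
  have hc := hps.deriv
  rw [hder] at hc
  rw [hc]
  have happ := cauchyPowerSeries_apply (fun s : ℂ => F (x + s • b)) 0 r 1 1
  rw [FormalMultilinearSeries.apply_eq_prod_smul_coeff] at happ
  simpa using happ

-- L4: local bound on the operator norm of fderiv
lemma fderivBound {U : Set (Fin n → ℂ)} (hU : IsOpen U) {F : (Fin n → ℂ) → ℂ} (hF : DifferentiableOn ℂ F U)
    {z : (Fin n → ℂ)} {r M : ℝ} (hr : 0 < r) (hsub : closedBall z (3*r) ⊆ U)
    (hM : ∀ x ∈ closedBall z (3*r), ‖F x‖ ≤ M)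
    {x : (Fin n → ℂ)} (hx : x ∈ closedBall z (2*r)) :
    ‖fderiv ℂ F x‖ ≤ M / r := by
  have hM0 : 0 ≤ M := le_trans (norm_nonneg _) (hM z (by simp [dist_self]; positivity))
  apply ContinuousLinearMap.opNorm_le_bound _ (by positivity)
  intro v
  rcases eq_or_ne v 0 with rfl | hv
  · simp
  · have hnv : (0:ℝ) < ‖v‖ := norm_pos_iff.mpr hv
    set b : (Fin n → ℂ) := (‖v‖ : ℂ)⁻¹ • v with hbdef
    have hb : ‖b‖ ≤ 1 := by
      rw [hbdef, norm_smul]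
      simp [hnv.le, inv_mul_cancel₀ hnv.ne']
    have hvb : v = (‖v‖ : ℂ) • b := by
      rw [hbdef, smul_smul, mul_inv_cancel₀ (by exact_mod_cast hnv.ne'), one_smul]
    have hrep := cauchyRep hU hF hr hsub hb hx
    have hbound : ‖fderiv ℂ F x b‖ ≤ M / r := by
      rw [hrep, norm_smul]
      have : ‖∮ s in C(0, r), ((1:ℂ) / (s - 0)) ^ 1 • (s - 0)⁻¹ • F (x + s • b)‖
          ≤ 2 * Real.pi * r * (M / r ^ 2) := by
        apply circleIntegral.norm_integral_le_of_norm_le_const hr.le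
        intro s hs
        have hsn : ‖s‖ = r := by simpa using hs
        have hs0 : s ≠ 0 := by intro h; rw [h] at hsn; simp at hsn; linarith
        have hmem : x + s • b ∈ closedBall z (3*r) := by
          simp only [mem_closedBall, dist_eq_norm] at *
          calc ‖x + s • b - z‖ = ‖(x - z) + s • b‖ := by ring_nf
            _ ≤ ‖x - z‖ + ‖s • b‖ := norm_add_le _ _
            _ ≤ 2*r + ‖s‖ * ‖b‖ := by rw [norm_smul]; gcongr
            _ ≤ 2*r + r * 1 := by rw [hsn]; gcongr
            _ ≤ 3*r := by linarith
        rw [norm_smul, norm_smul]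
        simp only [sub_zero, one_div, norm_pow, norm_inv, hsn]
        calc r⁻¹ ^ 1 * (r⁻¹ * ‖F (x + s • b)‖) ≤ r⁻¹ ^ 1 * (r⁻¹ * M) := by
              gcongr; exact hM _ hmem
          _ = M / r ^ 2 := by
              rw [pow_one, eq_div_iff (by positivity : (r:ℝ)^2 ≠ 0),
                show r⁻¹ * (r⁻¹ * M) * r^2 = (r * r⁻¹)^2 * M by ring,
                mul_inv_cancel₀ hr.ne', one_pow, one_mul]
      calc ‖(2 * ↑Real.pi * I)⁻¹‖ * ‖∮ s in C(0, r), ((1:ℂ)/(s-0))^1 • (s-0)⁻¹ • F (x + s • b)‖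
          ≤ ‖(2 * ↑Real.pi * I)⁻¹‖ * (2 * Real.pi * r * (M / r ^ 2)) := by gcongr
        _ = M / r := by
            simp [norm_inv, abs_of_pos Real.pi_pos]
            field_simp
    have hkey : ‖(fderiv ℂ F x) v‖ = ‖v‖ * ‖(fderiv ℂ F x) b‖ := by
      conv_lhs => rw [hvb]
      rw [(fderiv ℂ F x).map_smul, norm_smul, Complex.norm_real, norm_norm]
    rw [hkey]
    calc ‖v‖ * ‖(fderiv ℂ F x) b‖ ≤ ‖v‖ * (M / r) := by gcongr
      _ = M / r * ‖v‖ := by ring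

-- L5: differentiability of directional derivative functions
lemma fderivApplyDiff {U : Set (Fin n → ℂ)} (hU : IsOpen U) {F : (Fin n → ℂ) → ℂ} (hF : DifferentiableOn ℂ F U)
    {z : (Fin n → ℂ)} {r M : ℝ} (hr : 0 < r) (hsub : closedBall z (3*r) ⊆ U)
    (hM : ∀ x ∈ closedBall z (3*r), ‖F x‖ ≤ M)
    {b : (Fin n → ℂ)} (hb : ‖b‖ ≤ 1) :
    DifferentiableAt ℂ (fun w => fderiv ℂ F w b) z := by
  have hM0 : 0 ≤ M := le_trans (norm_nonneg _) (hM z (by simp [dist_self]; positivity))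
  set sm : ℝ → ℂ := fun θ => circleMap 0 r θ with hsm
  set kf : ℝ → ℂ := fun θ => deriv (circleMap 0 r) θ * ((sm θ)⁻¹ * (sm θ)⁻¹) with hkf
  set g : (Fin n → ℂ) → ℝ → ℂ := fun x θ => kf θ * F (x + sm θ • b) with hg
  set μ : Measure ℝ := volume.restrict (Ioc 0 (2*Real.pi)) with hμ
  have hsm0 : ∀ θ, sm θ ≠ 0 := fun θ => circleMap_ne_center hr.ne'
  have hsmn : ∀ θ : ℝ, ‖sm θ‖ = r := fun θ => by
    show ‖circleMap 0 r θ‖ = r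
    rw [norm_circleMap_zero, abs_of_pos hr]
  have hmem2 : ∀ x ∈ closedBall z (2*r), ∀ θ : ℝ, x + sm θ • b ∈ closedBall z (3*r) := by
    intro x hx θ
    simp only [mem_closedBall, dist_eq_norm] at *
    calc ‖x + sm θ • b - z‖ = ‖(x - z) + sm θ • b‖ := by ring_nf
      _ ≤ ‖x - z‖ + ‖sm θ‖ * ‖b‖ := by
          refine (norm_add_le _ _).trans ?_; rw [norm_smul]
      _ ≤ 2*r + r * 1 := by
          gcongr
          simpa using (hsmn θ).le
      _ ≤ 3*r := by linarith
  have hball2 : ∀ x ∈ ball z r, ∀ θ : ℝ, x + sm θ • b ∈ closedBall z (2*r) := by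
    intro x hx θ
    simp only [mem_ball, mem_closedBall, dist_eq_norm] at *
    calc ‖x + sm θ • b - z‖ = ‖(x - z) + sm θ • b‖ := by ring_nf
      _ ≤ ‖x - z‖ + ‖sm θ‖ * ‖b‖ := by
          refine (norm_add_le _ _).trans ?_; rw [norm_smul]
      _ ≤ ‖x - z‖ + r * 1 := by
          gcongr
          simpa using (hsmn θ).le
      _ ≤ 2*r := by linarith
  have hrep : ∀ x ∈ closedBall z (2*r),
      fderiv ℂ F x b = (2 * ↑Real.pi * I)⁻¹ • ∫ θ, g x θ ∂μ := by
    intro x hx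
    rw [cauchyRep hU hF hr hsub hb hx]
    congr 1
    rw [circleIntegral, intervalIntegral.integral_of_le (by positivity)]
    apply integral_congr_ae
    filter_upwards with θ
    simp only [hg, hkf, smul_eq_mul, sub_zero, pow_one, one_div]
    ring
  set G' : (Fin n → ℂ) → ℝ → (Fin n → ℂ) →L[ℂ] ℂ := fun x θ => kf θ • fderiv ℂ F (x + sm θ • b) with hG'
  have hkfcont : Continuous kf := by
    have h1 : Continuous fun θ => deriv (circleMap 0 r) θ := by
      simp only [deriv_circleMap]; exact (continuous_circleMap 0 r).mul continuous_const
    exact h1.mul (((continuous_circleMap 0 r).inv₀ hsm0).mul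
      ((continuous_circleMap 0 r).inv₀ hsm0))
  have hkfbound : ∀ θ, ‖kf θ‖ ≤ 1 / r := by
    intro θ
    apply le_of_eq
    simp only [hkf, norm_mul, deriv_circleMap, map_mul, Complex.norm_I,
      norm_inv, hsmn θ, norm_circleMap_zero, abs_of_pos hr]
    field_simp
  have hcontg : ∀ x ∈ closedBall z (2*r), Continuous (g x) := by
    intro x hx
    apply hkfcont.mul
    apply hF.continuousOn.comp_continuous
    · exact continuous_const.add ((continuous_circleMap 0 r).smul continuous_const)
    · intro θ
      exact hsub (hmem2 x hx θ)
  have hzc : z ∈ closedBall z (2*r) := by simp [dist_self]; positivity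
  have hdom : HasFDerivAt (fun x => ∫ θ, g x θ ∂μ) (∫ θ, G' z θ ∂μ) z := by
    apply hasFDerivAt_integral_of_dominated_of_fderiv_le (𝕜 := ℂ)
      (bound := fun _ => (1/r) * (M/r)) (Metric.ball_mem_nhds z hr)
    · filter_upwards [Metric.ball_mem_nhds z hr] with x hx
      exact (hcontg x (ball_subset_closedBall.trans
        (closedBall_subset_closedBall (by linarith)) hx)).aestronglyMeasurable
    · exact (hcontg z hzc).integrableOn_Ioc
    · apply AEStronglyMeasurable.smul hkfcont.aestronglyMeasurable
      apply Measurable.aestronglyMeasurable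
      exact (measurable_fderiv ℂ F).comp
        (measurable_const.add ((continuous_circleMap 0 r).measurable.smul measurable_const))
    · filter_upwards with θ
      intro x hx
      show ‖kf θ • fderiv ℂ F (x + sm θ • b)‖ ≤ 1 / r * (M / r)
      rw [norm_smul]
      exact mul_le_mul (hkfbound θ) (fderivBound hU hF hr hsub hM (hball2 x hx θ))
        (norm_nonneg _) (by positivity)
    · exact integrableOn_const measure_Ioc_lt_top.ne
    · filter_upwards with θ
      intro x hx
      have hu : x + sm θ • b ∈ U := hsub (closedBall_subset_closedBall (by linarith)
        (hball2 x hx θ))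
      have h0 : HasFDerivAt (fun y : (Fin n → ℂ) => y + sm θ • b)
          (ContinuousLinearMap.id ℂ (Fin n → ℂ)) x := (hasFDerivAt_id x).add_const _
      have h1 : HasFDerivAt F (fderiv ℂ F (x + sm θ • b)) (x + sm θ • b) :=
        (hF.differentiableAt (hU.mem_nhds hu)).hasFDerivAt
      have h2 := h1.comp x h0
      rw [ContinuousLinearMap.comp_id] at h2
      exact h2.const_mul (kf θ)
  have heq : (fun w => fderiv ℂ F w b) =ᶠ[nhds z]
      (fun w => (2 * ↑Real.pi * I)⁻¹ • ∫ θ, g w θ ∂μ) := by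
    filter_upwards [Metric.ball_mem_nhds z hr] with x hx
    exact hrep x (ball_subset_closedBall.trans (closedBall_subset_closedBall (by linarith)) hx)
  exact (heq.differentiableAt_iff).2 (hdom.differentiableAt.fun_const_smul _)

lemma sndDerivSymm {U : Set (Fin n → ℂ)} (hU : IsOpen U) {F : (Fin n → ℂ) → ℂ} (hF : DifferentiableOn ℂ F U)
    {z : (Fin n → ℂ)} (hz : z ∈ U) (i j : Fin n) :
    fderiv ℂ (fun w => fderiv ℂ F w (Pi.single j 1)) z (Pi.single i 1)
      = fderiv ℂ (fun w => fderiv ℂ F w (Pi.single i 1)) z (Pi.single j 1) := by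
  obtain ⟨ε, hε, hballU⟩ := Metric.isOpen_iff.mp hU z hz
  set r : ℝ := ε / 4 with hrdef
  have hr : 0 < r := by positivity
  have hsub : closedBall z (3*r) ⊆ U := by
    refine (closedBall_subset_ball ?_).trans hballU
    rw [hrdef]; linarith
  obtain ⟨M, hM⟩ := (isCompact_closedBall z (3*r)).exists_bound_of_continuousOn
    (hF.continuousOn.mono hsub)
  have hnorm1 : ∀ k : Fin n, ‖(Pi.single k 1 : (Fin n → ℂ))‖ ≤ 1 := by
    intro k; rw [Pi.norm_single]; simp
  have hdiffb : ∀ k : Fin n, DifferentiableAt ℂ (fun w => fderiv ℂ F w (Pi.single k 1)) z :=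
    fun k => fderivApplyDiff hU hF hr hsub hM (hnorm1 k)
  -- differentiability of w ↦ fderiv ℂ F w at z
  have hrepr : ∀ w ∈ U, fderiv ℂ F w
      = ∑ k : Fin n, (fderiv ℂ F w (Pi.single k 1)) •
          (ContinuousLinearMap.proj (R := ℂ) (φ := fun _ : Fin n => ℂ) k) := by
    intro w _
    ext v
    rw [ContinuousLinearMap.sum_apply]
    simp only [ContinuousLinearMap.smul_apply, ContinuousLinearMap.proj_apply]
    have hv : v = ∑ k : Fin n, Pi.single k (v k) := (Finset.univ_sum_single v).symm
    conv_lhs => rw [hv]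
    rw [map_sum]
    congr 1
    ext k
    have : Pi.single k (v k) = v k • (Pi.single k 1 : (Fin n → ℂ)) := by
      rw [← Pi.single_smul]; simp
    rw [this, (fderiv ℂ F w).map_smul]
    simp [mul_comm]
  have hΦ : DifferentiableAt ℂ (fderiv ℂ F) z := by
    have hsum : DifferentiableAt ℂ (fun w => ∑ k : Fin n, (fderiv ℂ F w (Pi.single k 1)) •
        (ContinuousLinearMap.proj (R := ℂ) (φ := fun _ : Fin n => ℂ) k)) z :=
      DifferentiableAt.fun_sum (fun k _ => (hdiffb k).smul_const _)
    apply hsum.congr_of_eventuallyEq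
    filter_upwards [hU.mem_nhds hz] with w hw
    exact hrepr w hw
  have hev : ∀ᶠ y in nhds z, HasFDerivAt F (fderiv ℂ F y) y := by
    filter_upwards [hU.mem_nhds hz] with y hy
    exact (hF.differentiableAt (hU.mem_nhds hy)).hasFDerivAt
  have hsymm := second_derivative_symmetric_of_eventually hev hΦ.hasFDerivAt
  have happ : ∀ u v : (Fin n → ℂ), fderiv ℂ (fun w => fderiv ℂ F w u) z v
      = fderiv ℂ (fderiv ℂ F) z v u := by
    intro u v
    have h := hΦ.hasFDerivAt.clm_apply (hasFDerivAt_const u z)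
    rw [h.fderiv]
    simp
  rw [happ, happ, hsymm]

end AuxAnalytic

lemma dphi_snd (n : ℕ) (F : (Fin n → ℂ) → ℂ) (z : Fin n → ℂ) (a : Fin n → ℂ) (i : Fin n) :
    (dphiF n F z a).2 i = ∑ j, a j * hessF n F z j i := by
  show fderiv ℂ (fun w => fderiv ℂ F w (Pi.single i 1)) z a = _
  have hv : a = ∑ j : Fin n, Pi.single j (a j) := (Finset.univ_sum_single a).symm
  conv_lhs => rw [hv]
  rw [map_sum]
  congr 1
  ext j
  have h1 : Pi.single j (a j) = a j • (Pi.single j 1 : Fin n → ℂ) := by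
    rw [← Pi.single_smul]; simp
  rw [h1, (fderiv ℂ (fun w => fderiv ℂ F w (Pi.single i 1)) z).map_smul]
  rfl

lemma gamma_eq (n : ℕ) (F : (Fin n → ℂ) → ℂ) (z : Fin n → ℂ)
    (hsym : ∀ i j, hessF n F z i j = hessF n F z j i) (a b : Fin n → ℂ) :
    gammaH n (dphiF n F z a) (dphiF n F z b)
      = ∑ i, ∑ j, a i * (starRingEnd ℂ) (b j) * (2 * ((hessF n F z i j).im : ℂ)) := by
  set H := hessF n F z with hH
  rw [gammaH, Omg]
  have : ∀ i : Fin n, (dphiF n F z a).1 i * (tauC n (dphiF n F z b)).2 i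
      - (dphiF n F z a).2 i * (tauC n (dphiF n F z b)).1 i
      = a i * (starRingEnd ℂ) (∑ j, b j * H j i) - (∑ j, a j * H j i) * (starRingEnd ℂ) (b i) := by
    intro i
    simp only [tauC]
    simp only [dphi_snd, ← hH]
    rfl
  rw [Finset.mul_sum]
  rw [Finset.sum_congr rfl (fun i _ => congrArg (Complex.I * ·) (this i))]
  have step1 : ∀ i : Fin n,
      Complex.I * (a i * (starRingEnd ℂ) (∑ j, b j * H j i) - (∑ j, a j * H j i) * (starRingEnd ℂ) (b i))
      = (∑ j, Complex.I * (a i * (starRingEnd ℂ) (b j) * (starRingEnd ℂ) (H j i)))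
        - (∑ j, Complex.I * (a j * H j i * (starRingEnd ℂ) (b i))) := by
    intro i
    rw [map_sum, Finset.mul_sum, Finset.sum_mul, ← Finset.sum_sub_distrib, Finset.mul_sum,
      ← Finset.sum_sub_distrib]
    apply Finset.sum_congr rfl
    intro j _
    rw [map_mul]
    ring
  rw [Finset.sum_congr rfl (fun i _ => step1 i), Finset.sum_sub_distrib]
  rw [Finset.sum_comm (s := Finset.univ) (t := Finset.univ)
    (f := fun i j => Complex.I * (a j * H j i * (starRingEnd ℂ) (b i)))]
  rw [← Finset.sum_sub_distrib]
  apply Finset.sum_congr rfl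
  intro i _
  rw [← Finset.sum_sub_distrib]
  apply Finset.sum_congr rfl
  intro j _
  rw [hsym j i]
  push_cast
  linear_combination (norm := (push_cast; ring1)) (-Complex.I * a i * (starRingEnd ℂ) (b j)) * Complex.sub_conj (H i j)
    - (a i * (starRingEnd ℂ) (b j) * ((H i j).im : ℂ) * 2) * Complex.I_sq

theorem alg_main (n : ℕ) (F : (Fin n → ℂ) → ℂ) (z : Fin n → ℂ)
    (hsym : ∀ i j, hessF n F z i j = hessF n F z j i) :
    (∀ a : Fin n → ℂ, (∀ b : Fin n → ℂ, gammaH n (dphiF n F z a) (dphiF n F z b) = 0) → a = 0)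
      ↔ Matrix.det ((hessF n F z).map Complex.im) ≠ 0 := by
  set H := hessF n F z with hH
  set N : Matrix (Fin n) (Fin n) ℝ := H.map Complex.im with hN
  set M : Matrix (Fin n) (Fin n) ℂ := N.map (Complex.ofRealHom : ℝ →+* ℂ) with hM
  have key : ∀ a : Fin n → ℂ,
      (∀ b : Fin n → ℂ, gammaH n (dphiF n F z a) (dphiF n F z b) = 0)
        ↔ Matrix.vecMul a M = 0 := by
    intro a
    constructor
    · intro h
      funext j0
      have := h (Pi.single j0 1)
      rw [gamma_eq n F z hsym] at this
      simp only [Pi.single_apply] at this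
      rw [Finset.sum_comm] at this
      simp only [apply_ite (starRingEnd ℂ), map_one, map_zero] at this
      have h2 : ∑ j, ∑ i, a i * (if j = j0 then (1:ℂ) else 0) * (2 * ((H i j).im : ℂ))
          = 2 * ∑ i, a i * ((H i j0).im : ℂ) := by
        rw [Finset.sum_eq_single j0]
        · rw [Finset.mul_sum]; apply Finset.sum_congr rfl; intro i _; simp; ring
        · intro c _ hc; apply Finset.sum_eq_zero; intro i _; rw [if_neg hc]; ring
        · simp
      rw [h2] at this
      have h3 : ∑ i, a i * ((H i j0).im : ℂ) = 0 := by
        rcases mul_eq_zero.mp this with h | h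
        · norm_num at h
        · exact h
      simpa [Matrix.vecMul, dotProduct, hM, hN] using h3
    · intro h b
      rw [gamma_eq n F z hsym]
      have h4 : ∀ j, ∑ i, a i * ((H i j).im : ℂ) = 0 := by
        intro j
        have := congrFun h j
        simpa [Matrix.vecMul, dotProduct, hM, hN] using this
      rw [Finset.sum_comm]
      apply Finset.sum_eq_zero
      intro j _
      have : ∑ i, a i * (starRingEnd ℂ) (b j) * (2 * ((H i j).im : ℂ))
          = (starRingEnd ℂ) (b j) * 2 * ∑ i, a i * ((H i j).im : ℂ) := by
        rw [Finset.mul_sum]; apply Finset.sum_congr rfl; intro i _; ring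
      rw [this, h4 j, mul_zero]
  constructor
  · intro hnd
    intro hdet
    have : M.det = 0 := by
      rw [hM, ← RingHom.mapMatrix_apply, ← RingHom.map_det]
      simpa using hdet
    obtain ⟨v, hv0, hv⟩ := Matrix.exists_vecMul_eq_zero_iff.mpr this
    exact hv0 (hnd v ((key v).mpr hv))
  · intro hdet a ha
    by_contra ha0
    have : M.det = 0 := Matrix.exists_vecMul_eq_zero_iff.mp ⟨a, ha0, (key a).mp ha⟩
    rw [hM, ← RingHom.mapMatrix_apply, ← RingHom.map_det] at this
    rw [show (Complex.ofRealHom N.det) = ((N.det : ℝ) : ℂ) from rfl] at this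
    exact hdet (by exact_mod_cast this)

/-- Let `F` be holomorphic on an open `U ⊂ ℂ^n` and `φ = dF : U → ℂ^{2n}`.
Then `φ` is Kählerian at `z ∈ U`, i.e. the pullback `φ*γ : (a,b) ↦ γ(dφ_z a, dφ_z b)`
of the Hermitian form `γ` is nondegenerate, if and only if `det (Im ∂²F)(z) ≠ 0`. -/
theorem stmt12 (n : ℕ) (U : Set (Fin n → ℂ)) (hU : IsOpen U)
    (F : (Fin n → ℂ) → ℂ) (hF : DifferentiableOn ℂ F U)
    (z : Fin n → ℂ) (hz : z ∈ U) :
    (∀ a : Fin n → ℂ, (∀ b : Fin n → ℂ, gammaH n (dphiF n F z a) (dphiF n F z b) = 0) → a = 0)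
      ↔ Matrix.det ((hessF n F z).map Complex.im) ≠ 0 := by
  exact alg_main n F z (fun i j => sndDerivSymm hU hF hz i j)
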